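/- Let n ≥ 5 and 2 ≤ k < n/2 be integers, b, c real parameters, and ξ : ℝ → ℝ a C² function with |ξ'| < 1. Define m_{b,c}(t) = (2^{1-k}/n)·C(n,k)·(1-ξ'(t))^{-k(b+c)}·(1+ξ'(t))^{-k(b-c)}·e^{(n-2k)(b·ξ(t) + c·t)}. Then for all t₁ ≤ t₂, m_{b,c}(t₂) - m_{b,c}(t₁) = 2·∫_{t₁}^{t₂} F_k[ξ](τ)·(1-ξ'(τ))^{-k(b+c+1)}·(1+ξ'(τ))^{-k(b-c+1)}·(b·ξ'(τ) + c)·e^{((n-2k)b - 2k)ξ(τ) + (n-2k)c·τ} dτ, where F_k[ξ](t) = 2^{1-k}·C(n-1,k-1)·e^{2kξ(t)}(1-ξ'(t)²)^{k-1}(ξ''(t) + ((n-2k)/(2k))(1-ξ'(t)²)). -/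

import Mathlib

open Real intervalIntegral

theorem stmt_17 (n k : ℕ) (hn : 5 ≤ n) (hk : 2 ≤ k) (hkn : 2 * k < n)
    (b c : ℝ)
    (ξ : ℝ → ℝ) (hξ : ContDiff ℝ 2 ξ) (hξ' : ∀ t, |deriv ξ t| < 1)
    (Fk : ℝ → ℝ)
    (hFk : ∀ t, Fk t = (2:ℝ) ^ ((1:ℝ) - (k:ℝ)) * ((n - 1).choose (k - 1) : ℝ) *
        Real.exp (2 * (k:ℝ) * ξ t) * (1 - (deriv ξ t) ^ 2) ^ (k - 1) *
        (deriv (deriv ξ) t + (((n:ℝ) - 2 * (k:ℝ)) / (2 * (k:ℝ))) * (1 - (deriv ξ t) ^ 2)))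
    (m : ℝ → ℝ)
    (hm : ∀ t, m t = ((2:ℝ) ^ ((1:ℝ) - (k:ℝ)) / (n:ℝ)) * (n.choose k : ℝ) *
        (1 - deriv ξ t) ^ (-(k:ℝ) * (b + c)) * (1 + deriv ξ t) ^ (-(k:ℝ) * (b - c)) *
        Real.exp (((n:ℝ) - 2 * (k:ℝ)) * (b * ξ t + c * t))) :
    ∀ t₁ t₂ : ℝ, t₁ ≤ t₂ →
      m t₂ - m t₁ =
        2 * ∫ τ in t₁..t₂, Fk τ * (1 - deriv ξ τ) ^ (-(k:ℝ) * (b + c + 1)) *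
          (1 + deriv ξ τ) ^ (-(k:ℝ) * (b - c + 1)) * (b * deriv ξ τ + c) *
          Real.exp ((((n:ℝ) - 2 * (k:ℝ)) * b - 2 * (k:ℝ)) * ξ τ + ((n:ℝ) - 2 * (k:ℝ)) * c * τ) := by
  intro t₁ t₂ _ht
  simp only [hFk]
  have hx1 : ∀ t, 0 < 1 - deriv ξ t := fun t => by
    have := abs_lt.mp (hξ' t); linarith [this.2]
  have hx2 : ∀ t, 0 < 1 + deriv ξ t := fun t => by
    have := abs_lt.mp (hξ' t); linarith [this.1]
  have hξ2 : ContDiff ℝ ((1:WithTop ℕ∞) + 1) ξ := by norm_num; exact hξ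
  obtain ⟨hξ1, -, hdξ⟩ := contDiff_succ_iff_deriv.mp hξ2
  obtain ⟨hd2, hcont2⟩ := contDiff_one_iff_deriv.mp hdξ
  -- the integrand (with Fk expanded)
  set g : ℝ → ℝ := fun τ =>
      ((2:ℝ) ^ ((1:ℝ) - (k:ℝ)) * ((n - 1).choose (k - 1) : ℝ) *
        Real.exp (2 * (k:ℝ) * ξ τ) * (1 - (deriv ξ τ) ^ 2) ^ (k - 1) *
        (deriv (deriv ξ) τ + (((n:ℝ) - 2 * (k:ℝ)) / (2 * (k:ℝ))) * (1 - (deriv ξ τ) ^ 2)))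
        * (1 - deriv ξ τ) ^ (-(k:ℝ) * (b + c + 1)) *
          (1 + deriv ξ τ) ^ (-(k:ℝ) * (b - c + 1)) * (b * deriv ξ τ + c) *
          Real.exp ((((n:ℝ) - 2 * (k:ℝ)) * b - 2 * (k:ℝ)) * ξ τ + ((n:ℝ) - 2 * (k:ℝ)) * c * τ) with hg
  have key : ∀ t, HasDerivAt m (2 * g t) t := by
    intro t
    have hd : HasDerivAt (deriv ξ) (deriv (deriv ξ) t) t := (hd2 t).hasDerivAt
    have h1 : HasDerivAt (fun s => 1 - deriv ξ s) (-(deriv (deriv ξ) t)) t := hd.const_sub 1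
    have h2 : HasDerivAt (fun s => 1 + deriv ξ s) (deriv (deriv ξ) t) t := hd.const_add 1
    have H1 := h1.rpow_const (p := -(k:ℝ) * (b + c)) (Or.inl (hx1 t).ne')
    have H2 := h2.rpow_const (p := -(k:ℝ) * (b - c)) (Or.inl (hx2 t).ne')
    have H3i : HasDerivAt (fun s => ((n:ℝ) - 2 * (k:ℝ)) * (b * ξ s + c * s))
        (((n:ℝ) - 2 * (k:ℝ)) * (b * deriv ξ t + c * 1)) t := by
      exact ((((hξ1 t).hasDerivAt.const_mul b).add ((hasDerivAt_id t).const_mul c)).const_mul _)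
    have H3 := H3i.exp
    have Hm := (((H1.const_mul ((2:ℝ) ^ ((1:ℝ) - (k:ℝ)) / (n:ℝ) * (n.choose k : ℝ))).mul H2).mul H3)
    have hmf : m = fun s => ((2:ℝ) ^ ((1:ℝ) - (k:ℝ)) / (n:ℝ)) * (n.choose k : ℝ) *
        (1 - deriv ξ s) ^ (-(k:ℝ) * (b + c)) * (1 + deriv ξ s) ^ (-(k:ℝ) * (b - c)) *
        Real.exp (((n:ℝ) - 2 * (k:ℝ)) * (b * ξ s + c * s)) := funext hm
    rw [hmf]
    convert Hm using 1
    case e'_4 => rfl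
    case e'_5 => rfl
    case e'_8 => rfl
    have hu1 := hx1 t
    have hu2 := hx2 t
    have hn0 : (n:ℝ) ≠ 0 := by
      have : 0 < n := by omega
      exact_mod_cast this.ne'
    have hk0 : (k:ℝ) ≠ 0 := by
      have : 0 < k := by omega
      exact_mod_cast this.ne'
    have hnat : n * Nat.choose (n-1) (k-1) = Nat.choose n k * k := by
      obtain ⟨n', rfl⟩ : ∃ n', n = n' + 1 := ⟨n - 1, by omega⟩
      obtain ⟨k', rfl⟩ : ∃ k', k = k' + 1 := ⟨k - 1, by omega⟩
      simpa using Nat.add_one_mul_choose_eq n' k'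
    have hch : ((Nat.choose (n-1) (k-1) : ℕ) : ℝ) = (Nat.choose n k : ℝ) * k / n := by
      have := congrArg (Nat.cast : ℕ → ℝ) hnat
      push_cast at this
      rw [eq_div_iff hn0]
      linarith
    have hE : rexp ((↑n - 2*(k:ℝ)) * (b * ξ t + c * t)) =
        rexp (2*(k:ℝ)*ξ t) * rexp ((((n:ℝ) - 2*(k:ℝ))*b - 2*(k:ℝ))*ξ t + ((n:ℝ) - 2*(k:ℝ))*c*t) := by
      rw [← Real.exp_add]; congr 1; ring
    have hsq : (1 - deriv ξ t ^ 2) ^ (k-1) =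
        (1 - deriv ξ t) ^ ((k:ℝ)-1) * (1 + deriv ξ t) ^ ((k:ℝ)-1) := by
      rw [show (1 - deriv ξ t ^ 2 : ℝ) = (1 - deriv ξ t) * (1 + deriv ξ t) by ring, mul_pow,
        ← Real.rpow_natCast (1 - deriv ξ t) (k-1), ← Real.rpow_natCast (1 + deriv ξ t) (k-1),
        Nat.cast_sub (by omega : 1 ≤ k), Nat.cast_one]
    have hA : (1 - deriv ξ t) ^ (-(k:ℝ)*(b+c+1)) =
        (1 - deriv ξ t) ^ (-(k:ℝ)*(b+c)-1) / (1 - deriv ξ t) ^ ((k:ℝ)-1) := by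
      rw [← Real.rpow_sub hu1]; congr 1; ring
    have hB : (1 + deriv ξ t) ^ (-(k:ℝ)*(b-c+1)) =
        (1 + deriv ξ t) ^ (-(k:ℝ)*(b-c)-1) / (1 + deriv ξ t) ^ ((k:ℝ)-1) := by
      rw [← Real.rpow_sub hu2]; congr 1; ring
    have hpow1 : (1 - deriv ξ t) ^ (-(k:ℝ)*(b+c)) =
        (1 - deriv ξ t) ^ (-(k:ℝ)*(b+c)-1) * (1 - deriv ξ t) := by
      rw [← Real.rpow_add_one hu1.ne']; congr 1; ring
    have hpow2 : (1 + deriv ξ t) ^ (-(k:ℝ)*(b-c)) =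
        (1 + deriv ξ t) ^ (-(k:ℝ)*(b-c)-1) * (1 + deriv ξ t) := by
      rw [← Real.rpow_add_one hu2.ne']; congr 1; ring
    have hW1 : (1 - deriv ξ t) ^ ((k:ℝ)-1) ≠ 0 := (Real.rpow_pos_of_pos hu1 _).ne'
    have hW2 : (1 + deriv ξ t) ^ ((k:ℝ)-1) ≠ 0 := (Real.rpow_pos_of_pos hu2 _).ne'
    rw [hg]
    simp only [Pi.mul_apply, hsq, hA, hB, hE, hpow1, hpow2, hch]
    field_simp
    ring
  have hgc : Continuous g := by
    have c1 : Continuous ξ := hξ1.continuous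
    have c2 : Continuous (deriv ξ) := hd2.continuous
    have cA : Continuous (fun τ => (1 - deriv ξ τ) ^ (-(k:ℝ)*(b+c+1))) :=
      (continuous_const.sub c2).rpow_const (fun τ => Or.inl (hx1 τ).ne')
    have cB : Continuous (fun τ => (1 + deriv ξ τ) ^ (-(k:ℝ)*(b-c+1))) :=
      (continuous_const.add c2).rpow_const (fun τ => Or.inl (hx2 τ).ne')
    rw [hg]
    exact (((((continuous_const.mul (Real.continuous_exp.comp
        (continuous_const.mul c1))).mul
        ((continuous_const.sub (c2.pow 2)).pow (k-1))).mul
        (hcont2.add (continuous_const.mul (continuous_const.sub (c2.pow 2))))).mul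
        cA).mul cB).mul
        ((continuous_const.mul c2).add continuous_const) |>.mul
        (Real.continuous_exp.comp ((continuous_const.mul c1).add
          (continuous_const.mul continuous_id)))
  rw [← intervalIntegral.integral_const_mul,
    intervalIntegral.integral_eq_sub_of_hasDerivAt (fun x _ => key x)
      ((continuous_const.mul hgc).intervalIntegrable t₁ t₂)]
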